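/- Define on the space X of continuous F_q-linear functions O → C̄ the operators a⁺φ = φ^q − φ and a⁻φ = (Δφ)^{1/q} where Δφ(t) = φ(xt) − xφ(t) (well-defined since Δφ is always a q-th power in X). Then a⁻a⁺ − a⁺a⁻ = [1]^{1/q} I, i.e. (a⁻a⁺ − a⁺a⁻)φ(t) = (x^q − x)^{1/q} φ(t) = (x − x^{1/q})φ(t) for all φ ∈ X. -/

import Mathlib

noncomputable section

open Filter Topology

/-- The bracket `[i] = x^{q^i} - x` as a polynomial over `F_q`. -/
def carBrP (Fq : Type*) [CommRing Fq] (q i : ℕ) : Polynomial Fq :=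
  Polynomial.X ^ q ^ i - Polynomial.X

/-- `D_0 = 1`, `D_i = [i] D_{i-1}^q`, as polynomials over `F_q`. -/
def carDP (Fq : Type*) [CommRing Fq] (q : ℕ) : ℕ → Polynomial Fq
  | 0 => 1
  | i + 1 => carBrP Fq q (i + 1) * (carDP Fq q i) ^ q

/-- The Carlitz polynomial function `e_i(t) = ∏_{m ∈ F_q[x], deg m < i} (t - m)`,
for `t ∈ O`, with values in `C̄`; here `σ : F_q[x] → O` and `ι : O → C̄` are the
structural embeddings, and the product runs over all polynomials `m` of degree `< i`,
enumerated by coefficient tuples. -/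
def carE {Fq O Cbar : Type*} [Field Fq] [Fintype Fq] [CommRing O] [Field Cbar]
    (σ : Polynomial Fq →+* O) (ι : O →+* Cbar) (i : ℕ) (t : O) : Cbar :=
  ∏ c : Fin i → Fq,
    (ι t - ι (σ (∑ k : Fin i, Polynomial.C (c k) * Polynomial.X ^ (k : ℕ))))

/-- The normalized Carlitz function `f_i(t) = e_i(t)/D_i`. -/
def carF {Fq O Cbar : Type*} [Field Fq] [Fintype Fq] [CommRing O] [Field Cbar]
    (q : ℕ) (σ : Polynomial Fq →+* O) (ι : O →+* Cbar) (i : ℕ) (t : O) : Cbar :=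
  carE σ ι i t / ι (σ (carDP Fq q i))

/-- Membership in the space `X` of continuous `F_q`-linear functions `O → C̄`. -/
def IsCarFun {Fq O Cbar : Type*} [Field Fq] [Fintype Fq] [CommRing O]
    [TopologicalSpace O] [Field Cbar] [TopologicalSpace Cbar]
    (σ : Polynomial Fq →+* O) (ι : O →+* Cbar) (φ : O → Cbar) : Prop :=
  Continuous φ ∧ (∀ t s : O, φ (t + s) = φ t + φ s) ∧
    ∀ (β : Fq) (t : O),
      φ (σ (Polynomial.C β) * t) = ι (σ (Polynomial.C β)) * φ t

/-- `φ = Σ c_i f_i` as a uniformly convergent series with `c_i → 0`. -/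
def HasCarExpansion {O Cbar : Type*} [NormedField Cbar]
    (f : ℕ → O → Cbar) (φ : O → Cbar) (c : ℕ → Cbar) : Prop :=
  Tendsto c atTop (𝓝 (0 : Cbar)) ∧
    TendstoUniformly (fun N t => ∑ i ∈ Finset.range N, c i * f i t) φ atTop

/-- The difference operator `(Δφ)(t) = φ(xt) - xφ(t)` on functions `O → C̄`. -/
def carDeltaFun {Fq O Cbar : Type*} [Field Fq] [Fintype Fq] [CommRing O] [Field Cbar]
    (σ : Polynomial Fq →+* O) (ι : O →+* Cbar) (φ : O → Cbar) : O → Cbar :=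
  fun t => φ (σ Polynomial.X * t) - ι (σ Polynomial.X) * φ t

/- STATEMENT 14: With a⁺φ = φ^q - φ and a⁻φ = (Δφ)^{1/q} (well defined since Δφ is
   always a q-th power, and q-th roots are unique in characteristic p), one has
   a⁻a⁺ - a⁺a⁻ = [1]^{1/q} I on X: for φ ∈ X, if ψ is the q-th root of Δφ (i.e.
   ψ = a⁻φ), χ is the q-th root of Δ(a⁺φ) (i.e. χ = a⁻a⁺φ), and r is the q-th root
   of x^q - x (i.e. r = [1]^{1/q} = x - x^{1/q}), then χ - (ψ^q - ψ) = r·φ. -/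

theorem carlitz_ccr
    (p γ : ℕ) (hp : p.Prime) (hγ : 0 < γ) (q : ℕ) (hq : q = p ^ γ)
    (Fq : Type*) [Field Fq] [Fintype Fq] (hcard : Fintype.card Fq = q)
    (O : Type*) [CommRing O] [TopologicalSpace O] [IsTopologicalRing O]
    [CompactSpace O] [T2Space O]
    (Cbar : Type*) [NormedField Cbar] [CompleteSpace Cbar] [IsAlgClosed Cbar]
    [CharP Cbar p]
    (hna : ∀ a b : Cbar, ‖a + b‖ ≤ max ‖a‖ ‖b‖)
    (σ : Polynomial Fq →+* O) (ι : O →+* Cbar)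
    (φ ψ χ : O → Cbar) (hφ : IsCarFun σ ι φ)
    (hψ : ∀ t : O, ψ t ^ q = carDeltaFun σ ι φ t)
    (hχ : ∀ t : O, χ t ^ q = carDeltaFun σ ι (fun s => φ s ^ q - φ s) t)
    (r : Cbar) (hr : r ^ q = ι (σ Polynomial.X) ^ q - ι (σ Polynomial.X)) :
    ∀ t : O, χ t - (ψ t ^ q - ψ t) = r * φ t := by
  haveI : Fact p.Prime := ⟨hp⟩
  subst hq
  have key : ∀ a b : Cbar, (a - b) ^ p ^ γ = a ^ p ^ γ - b ^ p ^ γ := fun a b =>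
    sub_pow_char_pow a b γ
  intro t
  have h1 : (χ t - (ψ t ^ p ^ γ - ψ t)) ^ p ^ γ = (r * φ t) ^ p ^ γ := by
    rw [key, key, mul_pow, hr, hχ, hψ]
    simp only [carDeltaFun]
    rw [key, mul_pow]
    ring
  have h3 : (χ t - (ψ t ^ p ^ γ - ψ t) - r * φ t) ^ p ^ γ = 0 := by
    rw [key, h1, sub_self]
  have h4 := pow_eq_zero_iff (pow_ne_zero γ hp.ne_zero) |>.mp h3
  linear_combination h4
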